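/- Let V_1,…,V_m be i.i.d. uniform elements of a finite set V of size n, and let A : V × V → ℝ_{≥0} be a nonnegative matrix with ℓ_p-operator norm at most B (for some p ∈ [1,∞]). Then for any fixed indices 1 ≤ j_1 < ⋯ < j_ℓ ≤ m, the expectation E[∏_{i=1}^{ℓ−1} A(V_{j_i}, V_{j_{i+1}})] is at most (B/n)^{ℓ−1}. -/

import Mathlib

open MeasureTheory
open scoped ENNReal

/-- The `ℓ_p` norm of a finitely indexed real vector. -/
noncomputable def vecNorm (p : ℝ≥0∞) [Fact (1 ≤ p)] {ι : Type*} [Fintype ι]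
    (v : ι → ℝ) : ℝ :=
  ‖(WithLp.equiv p (ι → ℝ)).symm v‖

/-- The `ℓ_p`-induced operator norm of a matrix: `sup_{v ≠ 0} ‖Av‖_p / ‖v‖_p`. -/
noncomputable def matOpNorm (p : ℝ≥0∞) [Fact (1 ≤ p)] {ι : Type*} [Fintype ι]
    (A : Matrix ι ι ℝ) : ℝ :=
  sSup {c | ∃ v : ι → ℝ, v ≠ 0 ∧ c = vecNorm p (A.mulVec v) / vecNorm p v}

section Aux

variable {ι : Type*} [Fintype ι] (p : ℝ≥0∞) [Fact (1 ≤ p)]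

lemma vecNorm_nonneg (v : ι → ℝ) : 0 ≤ vecNorm p v := norm_nonneg _

lemma vecNorm_pos {v : ι → ℝ} (hv : v ≠ 0) : 0 < vecNorm p v := by
  rw [vecNorm, norm_pos_iff]
  intro h
  apply hv
  have := congrArg (WithLp.equiv p (ι → ℝ)) h
  simpa using this

lemma vecNorm_zero : vecNorm p (0 : ι → ℝ) = 0 := by
  simp [vecNorm]

lemma matOpNorm_spec [Nonempty ι] (A : Matrix ι ι ℝ) :
    0 ≤ matOpNorm p A ∧
      ∀ v : ι → ℝ, vecNorm p (A.mulVec v) ≤ matOpNorm p A * vecNorm p v := by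
  classical
  set S := {c | ∃ v : ι → ℝ, v ≠ 0 ∧ c = vecNorm p (A.mulVec v) / vecNorm p v} with hS
  let e := WithLp.linearEquiv p ℝ (ι → ℝ)
  let T : WithLp p (ι → ℝ) →L[ℝ] WithLp p (ι → ℝ) :=
    LinearMap.toContinuousLinearMap (e.symm.toLinearMap ∘ₗ A.mulVecLin ∘ₗ e.toLinearMap)
  have hT : ∀ v : ι → ℝ, vecNorm p (A.mulVec v) ≤ ‖T‖ * vecNorm p v := by
    intro v
    have h1 : (WithLp.equiv p (ι → ℝ)).symm (A.mulVec v)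
        = T ((WithLp.equiv p (ι → ℝ)).symm v) := rfl
    rw [vecNorm, h1]
    exact T.le_opNorm _
  have hbdd : BddAbove S := by
    refine ⟨‖T‖, ?_⟩
    rintro c ⟨v, hv, rfl⟩
    rw [div_le_iff₀ (vecNorm_pos p hv)]
    exact hT v
  have hone : (fun _ : ι => (1:ℝ)) ≠ 0 := by
    intro h
    have := congrFun h (Classical.arbitrary ι)
    simpa using this
  have hmem : vecNorm p (A.mulVec (fun _ => 1)) / vecNorm p (fun _ : ι => (1:ℝ)) ∈ S :=
    ⟨_, hone, rfl⟩
  have h0 : 0 ≤ matOpNorm p A := by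
    refine le_trans ?_ (le_csSup hbdd hmem)
    exact div_nonneg (vecNorm_nonneg _ _) (vecNorm_nonneg _ _)
  refine ⟨h0, fun v => ?_⟩
  by_cases hv : v = 0
  · subst hv
    rw [Matrix.mulVec_zero, vecNorm_zero, mul_zero]
  · have hle : vecNorm p (A.mulVec v) / vecNorm p v ≤ matOpNorm p A :=
      le_csSup hbdd ⟨v, hv, rfl⟩
    exact (div_le_iff₀ (vecNorm_pos p hv)).mp hle

lemma sum_abs_le_card_mul_vecNorm [Nonempty ι] (w : ι → ℝ) :
    (∑ x, |w x|) * vecNorm p (fun _ : ι => (1:ℝ)) ≤ (Fintype.card ι : ℝ) * vecNorm p w := by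
  have hcard : (0:ℝ) < (Fintype.card ι : ℝ) := by
    exact_mod_cast Fintype.card_pos
  rcases eq_or_ne p ∞ with hp | hp
  · subst hp
    have h1 : vecNorm ∞ (fun _ : ι => (1:ℝ)) = 1 := by
      rw [vecNorm]
      rw [show ((WithLp.equiv ∞ (ι → ℝ)).symm fun _ => (1:ℝ)) =
        ((WithLp.equiv ∞ (ι → ℝ)).symm fun _ => (1:ℝ)) from rfl]
      rw [PiLp.norm_eq_ciSup]
      simp
    have h2 : ∀ x, |w x| ≤ vecNorm ∞ w := by
      intro x
      rw [vecNorm, PiLp.norm_eq_ciSup]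
      exact le_ciSup (f := fun i => ‖((WithLp.equiv ∞ (ι → ℝ)).symm w) i‖)
        (Finite.bddAbove_range _) x
    rw [h1, mul_one]
    calc ∑ x, |w x| ≤ ∑ _x : ι, vecNorm ∞ w := Finset.sum_le_sum fun x _ => h2 x
      _ = (Fintype.card ι : ℝ) * vecNorm ∞ w := by
          simp [Finset.sum_const, nsmul_eq_mul]
  · have hr : 1 ≤ p.toReal := by
      have := ENNReal.toReal_mono hp (Fact.out : (1:ℝ≥0∞) ≤ p)
      simpa using this
    have hr0 : 0 < p.toReal := lt_of_lt_of_le one_pos hr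
    set r := p.toReal
    set n : ℝ := (Fintype.card ι : ℝ)
    have hw : vecNorm p w = (∑ x, |w x| ^ r) ^ (1 / r) := by
      rw [vecNorm, PiLp.norm_eq_sum hr0]
      simp [Real.norm_eq_abs, r]
    have h1 : vecNorm p (fun _ : ι => (1:ℝ)) = n ^ (1 / r) := by
      rw [vecNorm, PiLp.norm_eq_sum hr0]
      simp [Real.one_rpow, n, r]
    have key := Real.arith_mean_le_rpow_mean (s := Finset.univ) (fun _ => n⁻¹)
      (fun x => |w x|) (fun i _ => by positivity)
      (by simp [Finset.sum_const, nsmul_eq_mul]; try field_simp; rfl) (fun i _ => abs_nonneg _) hr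
    set S : ℝ := ∑ x, |w x| ^ r with hSdef
    have hS0 : 0 ≤ S := Finset.sum_nonneg fun x _ => Real.rpow_nonneg (abs_nonneg _) _
    have key2 : n⁻¹ * (∑ x, |w x|) ≤ (n⁻¹) ^ (1/r) * S ^ (1/r) := by
      calc n⁻¹ * (∑ x, |w x|) = ∑ x, n⁻¹ * |w x| := by rw [Finset.mul_sum]
        _ ≤ (∑ x, n⁻¹ * |w x| ^ r) ^ (1/r) := key
        _ = (n⁻¹ * S) ^ (1/r) := by rw [← Finset.mul_sum]
        _ = (n⁻¹) ^ (1/r) * S ^ (1/r) := Real.mul_rpow (by positivity) hS0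
    have hcancel : (n⁻¹) ^ (1/r) * n ^ (1/r) = 1 := by
      rw [← Real.mul_rpow (by positivity) (le_of_lt hcard), inv_mul_cancel₀ (ne_of_gt hcard),
        Real.one_rpow]
    rw [hw, h1]
    calc (∑ x, |w x|) * n ^ (1/r)
        = (n * (n⁻¹ * ∑ x, |w x|)) * n ^ (1/r) := by
          field_simp
      _ ≤ (n * ((n⁻¹) ^ (1/r) * S ^ (1/r))) * n ^ (1/r) := by
          have hnr : (0:ℝ) ≤ n ^ (1/r) := Real.rpow_nonneg (le_of_lt hcard) _
          exact mul_le_mul_of_nonneg_right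
            (mul_le_mul_of_nonneg_left key2 (le_of_lt hcard)) hnr
      _ = (n * S ^ (1/r)) * ((n⁻¹) ^ (1/r) * n ^ (1/r)) := by ring
      _ = n * S ^ (1/r) := by rw [hcancel, mul_one]

end Aux

section Chain

variable {V : Type*} [Fintype V]

lemma chain_sum (A : Matrix V V ℝ) :
    ∀ (ℓ : ℕ) (φ : V → ℝ),
      ∑ v : Fin (ℓ+1) → V, φ (v 0) * ∏ i : Fin ℓ, A (v i.castSucc) (v i.succ)
        = ∑ x, φ x * (A.mulVec)^[ℓ] (fun _ => (1:ℝ)) x := by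
  intro ℓ
  induction ℓ with
  | zero =>
    intro φ
    simp only [Function.iterate_zero, id_eq, Finset.univ_eq_empty, Finset.prod_empty,
      mul_one, Finset.prod_const_one]
    refine Fintype.sum_equiv (Equiv.funUnique (Fin 1) V) _ _ fun v => ?_
    simp [Equiv.funUnique]
  | succ ℓ ih =>
    intro φ
    have hterm : ∀ (x : V) (w : Fin (ℓ+1) → V),
        φ ((Fin.cons x w : Fin (ℓ+1+1) → V) 0) * ∏ i : Fin (ℓ+1),
            A ((Fin.cons x w : Fin (ℓ+1+1) → V) i.castSucc)
              ((Fin.cons x w : Fin (ℓ+1+1) → V) i.succ)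
        = (φ x * A x (w 0)) * ∏ i : Fin ℓ, A (w i.castSucc) (w i.succ) := by
      intro x w
      rw [Fin.prod_univ_succ]
      simp only [Fin.cons_zero, Fin.castSucc_zero, Fin.cons_succ, ← Fin.succ_castSucc]
      ring
    have hsum := Equiv.sum_comp (Fin.consEquiv (fun _ : Fin (ℓ+1+1) => V))
      (fun v : Fin (ℓ+1+1) → V => φ (v 0) * ∏ i : Fin (ℓ+1), A (v i.castSucc) (v i.succ))
    rw [← hsum, Fintype.sum_prod_type]
    calc ∑ x, ∑ w : Fin (ℓ+1) → V,
          (fun v : Fin (ℓ+1+1) → V => φ (v 0) * ∏ i : Fin (ℓ+1), A (v i.castSucc) (v i.succ))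
            (Fin.consEquiv (fun _ => V) (x, w))
        = ∑ x, ∑ w : Fin (ℓ+1) → V,
            (φ x * A x (w 0)) * ∏ i : Fin ℓ, A (w i.castSucc) (w i.succ) := by
          exact Finset.sum_congr rfl fun x _ => Finset.sum_congr rfl fun w _ => hterm x w
      _ = ∑ x, ∑ y, (φ x * A x y) * (A.mulVec)^[ℓ] (fun _ => (1:ℝ)) y := by
          exact Finset.sum_congr rfl fun x _ => ih (fun y => φ x * A x y)
      _ = ∑ x, φ x * (A.mulVec)^[ℓ+1] (fun _ => (1:ℝ)) x := by
          refine Finset.sum_congr rfl fun x _ => ?_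
          rw [Function.iterate_succ_apply']
          simp only [Matrix.mulVec, dotProduct, Finset.mul_sum]
          refine Finset.sum_congr rfl fun y _ => by ring

lemma iter_nonneg (A : Matrix V V ℝ) (hA : ∀ i j, 0 ≤ A i j) :
    ∀ (k : ℕ) (x : V), 0 ≤ (A.mulVec)^[k] (fun _ => (1:ℝ)) x := by
  intro k
  induction k with
  | zero => intro x; simp
  | succ k ih =>
    intro x
    rw [Function.iterate_succ_apply']
    exact Finset.sum_nonneg fun y _ => mul_nonneg (hA x y) (ih y)

end Chain

/-- For i.i.d. uniform `V_1, …, V_m` and a nonnegative matrix `A` with `ℓ_p` operator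
norm at most `B`, the expectation of a product of `ℓ` matrix entries along a chain
of `ℓ+1` increasing indices is at most `(B/n)^ℓ`. -/
theorem stmt_18 {V : Type*} [Fintype V] [Nonempty V] [MeasurableSpace V]
    [MeasurableSingletonClass V]
    {α : Type*} [MeasurableSpace α] (μ : Measure α) [IsProbabilityMeasure μ]
    (m : ℕ) (X : Fin m → α → V) (hX : ∀ i, Measurable (X i))
    (hunif : ∀ i, Measure.map (X i) μ = (PMF.uniformOfFintype V).toMeasure)
    (hindep : ∀ (s : Finset (Fin m)) (v : Fin m → V),
      μ (⋂ i ∈ s, {a | X i a = v i}) = ∏ i ∈ s, μ {a | X i a = v i})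
    (A : Matrix V V ℝ) (hA : ∀ i j, 0 ≤ A i j)
    (p : ℝ≥0∞) [Fact (1 ≤ p)] (B : ℝ) (hB : matOpNorm p A ≤ B)
    (ℓ : ℕ) (j : Fin (ℓ+1) → Fin m) (hj : StrictMono j) :
    ∫ a, ∏ i : Fin ℓ, A (X (j i.castSucc) a) (X (j i.succ) a) ∂μ
      ≤ (B / (Fintype.card V : ℝ))^ℓ := by
  classical
  obtain ⟨hB0', hAle⟩ := matOpNorm_spec p A
  have hB0 : 0 ≤ B := le_trans hB0' hB
  have hAB : ∀ v : V → ℝ, vecNorm p (A.mulVec v) ≤ B * vecNorm p v := fun v =>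
    le_trans (hAle v) (mul_le_mul_of_nonneg_right hB (vecNorm_nonneg _ _))
  set nR : ℝ := (Fintype.card V : ℝ) with hnR
  have hn0 : (0:ℝ) < nR := by rw [hnR]; exact_mod_cast (Fintype.card_pos : 0 < Fintype.card V)
  set u : V → ℝ := fun _ => 1 with hu
  -- norm bound on iterates
  have hgnorm : ∀ k : ℕ, vecNorm p ((A.mulVec)^[k] u) ≤ B ^ k * vecNorm p u := by
    intro k
    induction k with
    | zero => simp
    | succ k ih =>
      rw [Function.iterate_succ_apply']
      calc vecNorm p (A.mulVec ((A.mulVec)^[k] u)) ≤ B * vecNorm p ((A.mulVec)^[k] u) :=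
            hAB _
        _ ≤ B * (B ^ k * vecNorm p u) := mul_le_mul_of_nonneg_left ih hB0
        _ = B ^ (k+1) * vecNorm p u := by ring
  have hupos : 0 < vecNorm p u := by
    refine vecNorm_pos p ?_
    intro h
    have := congrFun h (Classical.arbitrary V)
    simpa [u] using this
  -- sum bound
  have hgsum : ∑ x, (A.mulVec)^[ℓ] u x ≤ nR * B ^ ℓ := by
    have h1 : ∑ x, (A.mulVec)^[ℓ] u x = ∑ x, |(A.mulVec)^[ℓ] u x| :=
      Finset.sum_congr rfl fun x _ => (abs_of_nonneg (iter_nonneg A hA ℓ x)).symm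
    have h2 := sum_abs_le_card_mul_vecNorm p ((A.mulVec)^[ℓ] u)
    have h3 : (∑ x, |(A.mulVec)^[ℓ] u x|) * vecNorm p u ≤ (nR * B ^ ℓ) * vecNorm p u := by
      calc (∑ x, |(A.mulVec)^[ℓ] u x|) * vecNorm p u
          ≤ nR * vecNorm p ((A.mulVec)^[ℓ] u) := h2
        _ ≤ nR * (B ^ ℓ * vecNorm p u) :=
            mul_le_mul_of_nonneg_left (hgnorm ℓ) (le_of_lt hn0)
        _ = (nR * B ^ ℓ) * vecNorm p u := by ring
    rw [h1]
    exact le_of_mul_le_mul_right h3 hupos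
  -- probabilistic reduction
  set Y : α → (Fin (ℓ+1) → V) := fun a i => X (j i) a with hYdef
  have hYm : Measurable Y := measurable_pi_lambda _ fun i => hX (j i)
  set F : (Fin (ℓ+1) → V) → ℝ := fun v => ∏ i : Fin ℓ, A (v i.castSucc) (v i.succ) with hF
  haveI : IsProbabilityMeasure (Measure.map Y μ) := Measure.isProbabilityMeasure_map hYm.aemeasurable
  have hone : ∀ (k : Fin m) (c : V), μ {a | X k a = c} = (Fintype.card V : ℝ≥0∞)⁻¹ := by
    intro k c
    have hs : {a | X k a = c} = X k ⁻¹' {c} := rfl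
    rw [hs, ← Measure.map_apply (hX k) (measurableSet_singleton c), hunif k,
      PMF.toMeasure_apply_singleton (PMF.uniformOfFintype V) c (measurableSet_singleton c), PMF.uniformOfFintype_apply]
  have hmeas : ∀ v : Fin (ℓ+1) → V,
      Measure.map Y μ {v} = (Fintype.card V : ℝ≥0∞)⁻¹ ^ (ℓ+1) := by
    intro v
    set v' : Fin m → V := fun k =>
      if h : ∃ i, j i = k then v h.choose else Classical.arbitrary V with hv'def
    have hv' : ∀ i, v' (j i) = v i := by
      intro i
      have h : ∃ i', j i' = j i := ⟨i, rfl⟩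
      simp only [hv'def, dif_pos h]
      exact congrArg v (hj.injective h.choose_spec)
    have hpre : Y ⁻¹' {v} = ⋂ k ∈ Finset.image j Finset.univ, {a | X k a = v' k} := by
      ext a
      simp only [Set.mem_preimage, Set.mem_singleton_iff, funext_iff, Set.mem_iInter,
        Finset.mem_image, Finset.mem_univ, true_and, Set.mem_setOf_eq]
      constructor
      · rintro h k ⟨i, rfl⟩
        rw [hv' i]
        exact h i
      · intro h i
        have := h (j i) ⟨i, rfl⟩
        rwa [hv' i] at this
    rw [Measure.map_apply hYm (measurableSet_singleton v), hpre, hindep]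
    rw [Finset.prod_image (fun a _ b _ h => hj.injective h)]
    have : ∀ i : Fin (ℓ+1), μ {a | X (j i) a = v' (j i)} = (Fintype.card V : ℝ≥0∞)⁻¹ :=
      fun i => hone (j i) (v' (j i))
    rw [Finset.prod_congr rfl fun i _ => this i]
    simp [Finset.prod_const]
  have hint : ∫ a, F (Y a) ∂μ = ∑ v, ((Measure.map Y μ) {v}).toReal • F v := by
    rw [← integral_map hYm.aemeasurable
      ((measurable_of_countable F).stronglyMeasurable.aestronglyMeasurable)]
    exact integral_fintype (Integrable.of_finite)
  have htoReal : ((Fintype.card V : ℝ≥0∞)⁻¹ ^ (ℓ+1)).toReal = (nR⁻¹) ^ (ℓ+1) := by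
    rw [ENNReal.toReal_pow, ENNReal.toReal_inv]
    simp [hnR]
  have hFsum : ∑ v, F v = ∑ x, (A.mulVec)^[ℓ] u x := by
    have := chain_sum A ℓ (fun _ => (1:ℝ))
    simpa [hF] using this
  have hFnonneg : ∀ v, 0 ≤ F v := fun v => Finset.prod_nonneg fun i _ => hA _ _
  show ∫ a, F (Y a) ∂μ ≤ (B / nR) ^ ℓ
  rw [hint]
  have hstep : ∑ v, ((Measure.map Y μ) {v}).toReal • F v = (nR⁻¹) ^ (ℓ+1) * ∑ v, F v := by
    rw [Finset.mul_sum]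
    refine Finset.sum_congr rfl fun v _ => ?_
    rw [hmeas v, htoReal, smul_eq_mul]
  rw [hstep, hFsum]
  calc (nR⁻¹) ^ (ℓ+1) * ∑ x, (A.mulVec)^[ℓ] u x
      ≤ (nR⁻¹) ^ (ℓ+1) * (nR * B ^ ℓ) := by
        refine mul_le_mul_of_nonneg_left hgsum ?_
        positivity
    _ = (B / nR) ^ ℓ := by
        rw [div_pow]
        rw [pow_succ, inv_pow, div_eq_mul_inv, mul_assoc, inv_mul_cancel_left₀ hn0.ne', mul_comm]
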